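/- Let α > 1 and let Ω := {x + iy ∈ ℂ : 0 < x < 1, |y| < (1−x)^α}. Then the harmonic (hence subharmonic) function φ(z) = log|z − 1| is VMO on Ω, while its Lelong number at the boundary point 1 ∈ ∂Ω equals 1, i.e., ν_φ(1) = lim_{r→0⁺}(sup_{B(1,r)} φ)/(log r) = 1. (In particular, the interior sphere condition cannot be dropped in the global equivalence between VMO and vanishing Lelong numbers.) -/

import Mathlib

open MeasureTheory Metric Filter Topology
open scoped ENNReal NNReal

noncomputable section

/-- The mean value `φ_{B(z,r)}` of `φ : ℂ → [-∞,∞)` over the ball `B(z,r)` w.r.t. Lebesgue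
measure on `ℂ`. -/
def ballAvg (φ : ℂ → EReal) (z : ℂ) (r : ℝ) : ℝ :=
  ⨍ x in ball z r, (φ x).toReal

/-- The mean oscillation `MO_{B(z,r)}(φ)`. -/
def MO (φ : ℂ → EReal) (z : ℂ) (r : ℝ) : ℝ :=
  ⨍ x in ball z r, |(φ x).toReal - ballAvg φ z r|

/-- The set of mean oscillations of `φ` over admissible balls `B(z,r)`, `z ∈ Ω`,
`0 < r ≤ (1/2) · dist(z, ∂Ω)`. -/
def moSet (φ : ℂ → EReal) (Ω : Set ℂ) : Set ℝ :=
  {m | ∃ z ∈ Ω, ∃ r : ℝ, 0 < r ∧ r ≤ (1 / 2) * infDist z (frontier Ω) ∧ m = MO φ z r}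

/-- `φ` is BMO on `Ω`: its BMO norm is finite. -/
def IsBMOOn (φ : ℂ → EReal) (Ω : Set ℂ) : Prop := BddAbove (moSet φ Ω)

/-- `φ` is VMO on `Ω`. -/
def IsVMOOn (φ : ℂ → EReal) (Ω : Set ℂ) : Prop :=
  IsBMOOn φ Ω ∧
  ∀ ε : ℝ, 0 < ε → ∃ δ : ℝ, 0 < δ ∧ ∀ z ∈ Ω, ∀ r : ℝ, 0 < r →
    r ≤ min δ ((1 / 2) * infDist z (frontier Ω)) → MO φ z r < ε

/-- The Hölder domain `Ω = {x + iy : 0 < x < 1, |y| < (1-x)^α}`. -/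
def holderDomain (α : ℝ) : Set ℂ :=
  {z : ℂ | 0 < z.re ∧ z.re < 1 ∧ |z.im| < (1 - z.re) ^ α}

/-- The function `log |z - 1|`, with value `-∞` at `z = 1`. -/
def logDist : ℂ → EReal :=
  fun z => if z = 1 then (⊥ : EReal) else ((Real.log (‖z - 1‖) : ℝ) : EReal)

/-! ### Auxiliary lemmas -/

lemma toReal_logDist (x : ℂ) : (logDist x).toReal = Real.log (‖x - 1‖) := by
  unfold logDist; split_ifs with h <;> simp [h]

lemma avg_le_of_forall {z : ℂ} {r C : ℝ} (hr : 0 < r) {f : ℂ → ℝ}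
    (hf : IntegrableOn f (ball z r)) (h : ∀ x ∈ ball z r, f x ≤ C) :
    ⨍ x in ball z r, f x ≤ C := by
  have hvol₀ : volume (ball z r) ≠ 0 := (measure_ball_pos volume z hr).ne'
  have hvolt : (volume (ball z r)) ≠ ⊤ := measure_ball_lt_top.ne
  have hpos : 0 < (volume (ball z r)).toReal := ENNReal.toReal_pos hvol₀ hvolt
  rw [setAverage_eq]
  have hint : ∫ x in ball z r, f x ≤ ∫ _x in ball z r, C :=
    setIntegral_mono_on hf (integrableOn_const measure_ball_lt_top.ne)
      measurableSet_ball h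
  rw [setIntegral_const] at hint
  rw [smul_eq_mul]
  calc (volume (ball z r)).toReal⁻¹ * ∫ x in ball z r, f x
      ≤ (volume (ball z r)).toReal⁻¹ * ((volume (ball z r)).toReal • C) :=
        mul_le_mul_of_nonneg_left hint (by positivity)
    _ = C := by rw [smul_eq_mul]; field_simp

lemma le_avg_of_forall {z : ℂ} {r C : ℝ} (hr : 0 < r) {f : ℂ → ℝ}
    (hf : IntegrableOn f (ball z r)) (h : ∀ x ∈ ball z r, C ≤ f x) :
    C ≤ ⨍ x in ball z r, f x := by
  have := avg_le_of_forall hr hf.neg (f := fun x => -f x) (C := -C)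
    (fun x hx => by simpa using h x hx)
  have h2 : ⨍ x in ball z r, -f x = - ⨍ x in ball z r, f x :=
    average_neg (μ := volume.restrict (ball z r)) f
  rw [h2] at this
  linarith

lemma log_osc {s r a : ℝ} (hr : 0 < r) (h2 : 2 * r ≤ s) (h1 : s - r ≤ a) (h3 : a ≤ s + r) :
    |Real.log a - Real.log s| ≤ 2 * (r / s) := by
  have hs : 0 < s := by linarith
  have ha : 0 < a := by linarith
  rw [abs_le]
  constructor
  · have hsum : Real.log s - Real.log a = Real.log (s / a) := (Real.log_div hs.ne' ha.ne').symm
    have hle : Real.log (s / a) ≤ s / a - 1 := Real.log_le_sub_one_of_pos (by positivity)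
    have : s / a - 1 ≤ 2 * (r / s) := by
      rw [div_sub_one ha.ne', show 2 * (r / s) = (2*r)/s by ring,
        div_le_div_iff₀ ha (by positivity : (0:ℝ) < s)]
      nlinarith
    linarith
  · have hsum : Real.log a - Real.log s = Real.log (a / s) := (Real.log_div ha.ne' hs.ne').symm
    have hle : Real.log (a / s) ≤ a / s - 1 := Real.log_le_sub_one_of_pos (by positivity)
    have : a / s - 1 ≤ 2 * (r / s) := by
      rw [div_sub_one hs.ne', show 2 * (r / s) = (2*r)/s by ring,
        div_le_div_iff₀ hs (by positivity : (0:ℝ) < s)]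
      nlinarith
    linarith

lemma MO_bound {z : ℂ} {r : ℝ} (hr : 0 < r) (h2 : 2 * r ≤ ‖z - 1‖) :
    MO logDist z r ≤ 4 * (r / ‖z - 1‖) := by
  set s := ‖z - 1‖ with hs_def
  have hs : 0 < s := by linarith
  set g : ℂ → ℝ := fun x => Real.log (‖x - 1‖) with hg_def
  have hbound : ∀ x ∈ closedBall z r,
      s - r ≤ ‖x - 1‖ ∧ ‖x - 1‖ ≤ s + r := by
    intro x hx
    have hd : dist x z ≤ r := mem_closedBall.mp hx
    have h1 : dist x (1 : ℂ) = ‖x - 1‖ := Complex.dist_eq x 1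
    have h2' : dist z (1 : ℂ) = s := Complex.dist_eq z 1
    constructor
    · have : dist z 1 ≤ dist z x + dist x 1 := dist_triangle z x 1
      rw [h2', dist_comm z x] at this
      linarith [this, hd, (h1 ▸ le_refl (dist x 1))]
    · have : dist x 1 ≤ dist x z + dist z 1 := dist_triangle x z 1
      rw [h1, h2'] at this
      linarith
  have hosc : ∀ x ∈ closedBall z r, |g x - Real.log s| ≤ 2 * (r / s) := by
    intro x hx
    obtain ⟨hl, hu⟩ := hbound x hx
    exact log_osc hr h2 hl hu
  have hcont : ContinuousOn g (closedBall z r) := by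
    intro x hx
    have hpos : 0 < ‖x - 1‖ := by
      have := (hbound x hx).1; linarith
    have habs : ContinuousAt (fun x : ℂ => ‖x - 1‖) x :=
      (continuous_norm.continuousAt).comp (by fun_prop)
    exact (habs.log hpos.ne').continuousWithinAt
  have hint : IntegrableOn g (ball z r) :=
    (hcont.integrableOn_compact (isCompact_closedBall z r)).mono_set ball_subset_closedBall
  have hAvg : ballAvg logDist z r = ⨍ x in ball z r, g x := by
    unfold ballAvg; simp only [toReal_logDist]; rfl
  set A := ballAvg logDist z r with hA_def
  have hA1 : A ≤ Real.log s + 2 * (r / s) := by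
    rw [hAvg]
    exact avg_le_of_forall hr hint (fun x hx => by
      have := hosc x (ball_subset_closedBall hx); rw [abs_le] at this; linarith [this.2])
  have hA2 : Real.log s - 2 * (r / s) ≤ A := by
    rw [hAvg]
    exact le_avg_of_forall hr hint (fun x hx => by
      have := hosc x (ball_subset_closedBall hx); rw [abs_le] at this; linarith [this.1])
  have hMO : MO logDist z r = ⨍ x in ball z r, |g x - A| := by
    unfold MO; simp only [toReal_logDist]; rfl
  rw [hMO]
  have hint2 : IntegrableOn (fun x => |g x - A|) (ball z r) :=
    (((hcont.sub continuousOn_const).abs).integrableOn_compact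
      (isCompact_closedBall z r)).mono_set ball_subset_closedBall
  refine avg_le_of_forall hr hint2 (fun x hx => ?_)
  have h1 := hosc x (ball_subset_closedBall hx)
  have : |g x - A| ≤ |g x - Real.log s| + |Real.log s - A| := by
    calc |g x - A| = |(g x - Real.log s) + (Real.log s - A)| := by ring_nf
      _ ≤ _ := abs_add_le _ _
  have h3 : |Real.log s - A| ≤ 2 * (r / s) := by
    rw [abs_le]; constructor <;> linarith
  linarith

lemma tendsto_sub_inv : Tendsto (fun n : ℕ => (1 - ((n:ℝ) + 2)⁻¹ : ℝ)) atTop (𝓝 1) := by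
  have h1 : Tendsto (fun n : ℕ => ((n:ℝ) + 2)) atTop atTop :=
    tendsto_atTop_add_const_right atTop 2 tendsto_natCast_atTop_atTop
  have h0 : Tendsto (fun n : ℕ => ((n:ℝ) + 2)⁻¹) atTop (𝓝 0) := h1.inv_tendsto_atTop
  have := (tendsto_const_nhds : Tendsto (fun _ : ℕ => (1:ℝ)) atTop (𝓝 1)).sub h0
  simpa using this

lemma mem_closure_holder (α : ℝ) {x c : ℝ} (hx0 : 0 < x) (hx1 : x < 1)
    (hc : |c| ≤ (1 - x) ^ α) : ((x : ℂ) + (c : ℂ) * Complex.I) ∈ closure (holderDomain α) := by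
  have hpow : (0:ℝ) < (1 - x) ^ α := Real.rpow_pos_of_pos (by linarith) α
  set p : ℝ → ℂ := fun u => (x : ℂ) + (u : ℂ) * Complex.I with hp
  have hpc : Continuous p := by fun_prop
  have hseq : Tendsto (fun n : ℕ => ((1 - ((n:ℝ)+2)⁻¹) * c : ℝ)) atTop (𝓝 (1 * c)) :=
    tendsto_sub_inv.mul_const c
  have hten : Tendsto (fun n : ℕ => p ((1 - ((n:ℝ)+2)⁻¹) * c)) atTop (𝓝 (p (1 * c))) :=
    (hpc.tendsto _).comp hseq
  rw [show (1:ℝ) * c = c by ring] at hten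
  refine mem_closure_of_tendsto hten (Eventually.of_forall fun n => ?_)
  have hn1 : (0:ℝ) < ((n:ℝ)+2)⁻¹ := by positivity
  have hn2 : ((n:ℝ)+2)⁻¹ < 1 := by
    rw [inv_lt_one_iff₀]; right; linarith [Nat.cast_nonneg (α := ℝ) n]
  have hre : (p ((1 - ((n:ℝ)+2)⁻¹) * c)).re = x := by
    have : ∀ u : ℝ, (p u).re = x := fun u => by simp [hp]
    exact this _
  have him : (p ((1 - ((n:ℝ)+2)⁻¹) * c)).im = (1 - ((n:ℝ)+2)⁻¹) * c := by
    have : ∀ u : ℝ, (p u).im = u := fun u => by simp [hp]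
    exact this _
  refine ⟨by rw [hre]; exact hx0, by rw [hre]; exact hx1, ?_⟩
  rw [him, hre, abs_mul, abs_of_nonneg (by linarith : (0:ℝ) ≤ 1 - ((n:ℝ)+2)⁻¹)]
  calc (1 - ((n:ℝ)+2)⁻¹) * |c| ≤ (1 - ((n:ℝ)+2)⁻¹) * ((1-x) ^ α) :=
        mul_le_mul_of_nonneg_left hc (by linarith)
    _ < 1 * ((1-x) ^ α) := mul_lt_mul_of_pos_right (by linarith) hpow
    _ = (1-x) ^ α := one_mul _

lemma one_mem_closure_holder (α : ℝ) : (1 : ℂ) ∈ closure (holderDomain α) := by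
  have hten : Tendsto (fun n : ℕ => ((1 - ((n:ℝ)+2)⁻¹ : ℝ) : ℂ)) atTop (𝓝 ((1:ℝ) : ℂ)) :=
    (Complex.continuous_ofReal.tendsto _).comp tendsto_sub_inv
  rw [Complex.ofReal_one] at hten
  refine mem_closure_of_tendsto hten (Eventually.of_forall fun n => ?_)
  have hn1 : (0:ℝ) < ((n:ℝ)+2)⁻¹ := by positivity
  have hn2 : ((n:ℝ)+2)⁻¹ < 1 := by
    rw [inv_lt_one_iff₀]; right; linarith [Nat.cast_nonneg (α := ℝ) n]
  refine ⟨?_, ?_, ?_⟩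
  · rw [Complex.ofReal_re]; linarith
  · rw [Complex.ofReal_re]; linarith
  · rw [Complex.ofReal_im, Complex.ofReal_re, abs_zero]
    exact Real.rpow_pos_of_pos (by linarith) α

lemma one_mem_frontier_holder (α : ℝ) : (1 : ℂ) ∈ frontier (holderDomain α) := by
  rw [frontier]
  refine ⟨one_mem_closure_holder α, fun h => ?_⟩
  have : (1:ℂ) ∈ holderDomain α := interior_subset h
  exact absurd this.2.1 (by norm_num)

lemma holder_mem_frontier (α : ℝ) {x : ℝ} (hx0 : 0 < x) (hx1 : x < 1) :
    ((x : ℂ) + (((1-x) ^ α : ℝ) : ℂ) * Complex.I) ∈ frontier (holderDomain α) := by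
  rw [frontier]
  refine ⟨mem_closure_holder α hx0 hx1 (by
      rw [abs_of_nonneg (Real.rpow_pos_of_pos (by linarith) α).le]), fun h => ?_⟩
  have hmem : ((x : ℂ) + (((1-x) ^ α : ℝ) : ℂ) * Complex.I) ∈ holderDomain α := interior_subset h
  have him : ((x : ℂ) + (((1-x) ^ α : ℝ) : ℂ) * Complex.I).im = (1-x) ^ α := by simp
  have hre : ((x : ℂ) + (((1-x) ^ α : ℝ) : ℂ) * Complex.I).re = x := by simp
  have := hmem.2.2
  rw [him, hre, abs_of_nonneg (Real.rpow_pos_of_pos (by linarith) α).le] at this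
  exact absurd this (lt_irrefl _)

lemma iSup_logDist_ball {r : ℝ} (hr : 0 < r) :
    (⨆ z ∈ ball (1 : ℂ) r, logDist z) = ((Real.log r : ℝ) : EReal) := by
  apply le_antisymm
  · refine iSup₂_le fun z hz => ?_
    unfold logDist
    split_ifs with h
    · exact bot_le
    · have hlt : ‖z - 1‖ < r := by
        rw [← Complex.dist_eq]; exact mem_ball.mp hz
      have hpos : 0 < ‖z - 1‖ := norm_pos_iff.2 (sub_ne_zero.2 h)
      exact_mod_cast Real.log_le_log hpos hlt.le
  · by_contra hcon
    push_neg at hcon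
    obtain ⟨c, hSc, hcr⟩ := exists_between hcon
    have hcbot : c ≠ ⊥ := (bot_le.trans_lt hSc).ne'
    have hctop : c ≠ ⊤ := hcr.trans_le le_top |>.ne
    have hc : ((c.toReal : ℝ) : EReal) = c := EReal.coe_toReal hctop hcbot
    have hclt : c.toReal < Real.log r := by
      rw [← hc] at hcr; exact_mod_cast hcr
    set m : ℝ := (c.toReal + Real.log r) / 2 with hm
    have hm1 : c.toReal < m := by rw [hm]; linarith
    have hm2 : m < Real.log r := by rw [hm]; linarith
    set z : ℂ := 1 - (Real.exp m : ℝ) with hz_def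
    have habs : ‖z - 1‖ = Real.exp m := by
      rw [hz_def]
      have : (1 - ((Real.exp m : ℝ) : ℂ)) - 1 = -((Real.exp m : ℝ) : ℂ) := by ring
      rw [this, norm_neg, Complex.norm_real, Real.norm_eq_abs, abs_of_pos (Real.exp_pos m)]
    have hzball : z ∈ ball (1 : ℂ) r := by
      rw [mem_ball, Complex.dist_eq, habs]
      calc Real.exp m < Real.exp (Real.log r) := Real.exp_lt_exp.2 hm2
        _ = r := Real.exp_log hr
    have hzne : z ≠ 1 := by
      intro h
      have : ‖z - 1‖ = 0 := by rw [h]; simp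
      rw [habs] at this
      exact absurd this (Real.exp_pos m).ne'
    have hval : logDist z = ((m : ℝ) : EReal) := by
      unfold logDist
      rw [if_neg hzne, habs, Real.log_exp]
    have hle : logDist z ≤ ⨆ z ∈ ball (1 : ℂ) r, logDist z :=
      le_iSup₂ (f := fun z (_ : z ∈ ball (1:ℂ) r) => logDist z) z hzball
    rw [hval] at hle
    have : c < ((m : ℝ) : EReal) := by
      rw [← hc]; exact_mod_cast hm1
    exact absurd (hle.trans_lt hSc) (not_lt.2 this.le)

/-- Key geometric estimate: for `z ∈ Ω` and `r` admissible, `2r ≤ |z-1|` and `r ≤ |z-1|^α`. -/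
lemma admissible_bounds (α : ℝ) (hα : 1 < α) {z : ℂ} (hz : z ∈ holderDomain α) {r : ℝ}
    (hr : 0 < r) (hle : r ≤ (1 / 2) * infDist z (frontier (holderDomain α))) :
    2 * r ≤ ‖z - 1‖ ∧ r ≤ (‖z - 1‖) ^ α := by
  obtain ⟨hx0, hx1, hy⟩ := hz
  set x := z.re with hx_def
  set s := ‖z - 1‖ with hs_def
  have hd1 : infDist z (frontier (holderDomain α)) ≤ s := by
    have := infDist_le_dist_of_mem (x := z) (one_mem_frontier_holder α)
    rwa [Complex.dist_eq] at this
  have h2r : 2 * r ≤ s := by linarith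
  refine ⟨h2r, ?_⟩
  -- bound via the cusp boundary point
  set c : ℝ := (1 - x) ^ α with hc_def
  have hcpos : 0 < c := Real.rpow_pos_of_pos (by linarith) α
  set w : ℂ := (x : ℂ) + ((c : ℝ) : ℂ) * Complex.I with hw_def
  have hwf : w ∈ frontier (holderDomain α) := holder_mem_frontier α hx0 hx1
  have hdzw : dist z w = |z.im - c| := by
    rw [Complex.dist_eq]
    have hzw : z - w = ((z.im - c : ℝ) : ℂ) * Complex.I := by
      apply Complex.ext
      · simp [hw_def, hx_def]
      · simp [hw_def]
    rw [hzw, norm_mul, Complex.norm_real, Real.norm_eq_abs, Complex.norm_I, mul_one]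
  have hd2 : infDist z (frontier (holderDomain α)) ≤ 2 * c := by
    have h1 := infDist_le_dist_of_mem (x := z) hwf
    rw [hdzw] at h1
    have h2 : |z.im - c| ≤ |z.im| + c := by
      have := abs_sub (z.im) c
      calc |z.im - c| ≤ |z.im| + |c| := abs_sub _ _
        _ = |z.im| + c := by rw [abs_of_pos hcpos]
    have h3 : |z.im| ≤ c := hy.le
    linarith
  have hrc : r ≤ c := by linarith
  have hxs : 1 - x ≤ s := by
    have h1 : |(z - 1).re| ≤ ‖z - 1‖ := Complex.abs_re_le_norm _
    have h2 : (z - 1).re = x - 1 := by simp [hx_def]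
    rw [h2] at h1
    have h3 : |x - 1| = 1 - x := by rw [abs_of_nonpos (by linarith)]; ring
    rw [h3] at h1
    exact h1
  have hcs : c ≤ s ^ α := by
    rw [hc_def]
    exact Real.rpow_le_rpow (by linarith) hxs (by linarith)
  linarith

/-- **Example.** For `α > 1` and `Ω := {x + iy ∈ ℂ : 0 < x < 1, |y| < (1-x)^α}`, the point
`1` lies on `∂Ω`, the (subharmonic, indeed harmonic) function `φ(z) = log |z - 1|` is VMO on
`Ω`, yet its Lelong number at `1` equals `1`:
`ν_φ(1) = lim_{r→0⁺} (sup_{B(1,r)} φ) / log r = 1`.  Hence the interior sphere condition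
cannot be dropped in the global equivalence between VMO and vanishing Lelong numbers. -/
theorem isVMOOn_log_holderDomain (α : ℝ) (hα : 1 < α) :
    (1 : ℂ) ∈ frontier (holderDomain α) ∧
    IsVMOOn logDist (holderDomain α) ∧
    Tendsto (fun r : ℝ => (⨆ z ∈ ball (1 : ℂ) r, logDist z).toReal / Real.log r)
      (𝓝[>] (0 : ℝ)) (𝓝 1) := by
  refine ⟨one_mem_frontier_holder α, ⟨?_, ?_⟩, ?_⟩
  · -- BMO : bounded by 2
    refine ⟨2, fun m hm => ?_⟩
    obtain ⟨z, hz, r, hr, hle, hmeq⟩ := hm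
    obtain ⟨h2r, -⟩ := admissible_bounds α hα hz hr hle
    have hs : 0 < ‖z - 1‖ := by linarith
    have hmo := MO_bound hr h2r
    have hts : r / ‖z - 1‖ ≤ 1 / 2 := by
      rw [div_le_iff₀ hs]; linarith
    rw [hmeq]
    linarith
  · -- VMO
    intro ε hε
    have hα0 : (0:ℝ) < α := by linarith
    have hα1 : α - 1 ≠ 0 := by intro h; linarith [sub_eq_zero.mp h]
    set δ : ℝ := min 1 ((ε / 8) ^ (α / (α - 1))) with hδ_def
    have hδεpos : (0:ℝ) < (ε / 8) ^ (α / (α - 1)) :=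
      Real.rpow_pos_of_pos (by linarith) _
    have hδpos : 0 < δ := lt_min one_pos hδεpos
    refine ⟨δ, hδpos, fun z hz r hr hle => ?_⟩
    rw [le_min_iff] at hle
    obtain ⟨hrδ, hrd⟩ := hle
    obtain ⟨h2r, hrα⟩ := admissible_bounds α hα hz hr hrd
    set s := ‖z - 1‖ with hs_def
    have hs : 0 < s := by linarith
    set t : ℝ := r / s with ht_def
    have ht0 : 0 < t := by positivity
    -- t ≤ s^(α-1)
    have hts : t ≤ s ^ (α - 1) := by
      rw [ht_def, div_le_iff₀ hs]
      calc r ≤ s ^ α := hrα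
        _ = s ^ (α - 1) * s := by
            nth_rewrite 1 [show α = (α - 1) + 1 by ring]
            rw [Real.rpow_add_one hs.ne']
    have htδ : t ≤ δ / s := by
      rw [ht_def]
      gcongr
    have hta : t ^ α ≤ δ ^ (α - 1) := by
      have e1 : t ^ α = t ^ (α - 1) * t := by
        nth_rewrite 1 [show α = (α - 1) + 1 by ring]
        rw [Real.rpow_add_one ht0.ne']
      have e2 : t ^ (α - 1) ≤ (δ / s) ^ (α - 1) :=
        Real.rpow_le_rpow ht0.le htδ (by linarith)
      have e3 : t ^ (α - 1) * t ≤ (δ / s) ^ (α - 1) * s ^ (α - 1) :=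
        mul_le_mul e2 hts ht0.le (Real.rpow_nonneg (by positivity) _)
      have e4 : (δ / s) ^ (α - 1) * s ^ (α - 1) = δ ^ (α - 1) := by
        rw [← Real.mul_rpow (by positivity) hs.le, div_mul_cancel₀ _ hs.ne']
      rw [e1]
      linarith [e3, e4.symm ▸ e3]
    have ht_final : t ≤ δ ^ ((α - 1) * α⁻¹) := by
      have h5 : (t ^ α) ^ α⁻¹ ≤ (δ ^ (α - 1)) ^ α⁻¹ :=
        Real.rpow_le_rpow (Real.rpow_nonneg ht0.le α) hta (by positivity)
      rw [← Real.rpow_mul ht0.le, mul_inv_cancel₀ hα0.ne', Real.rpow_one,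
        ← Real.rpow_mul hδpos.le] at h5
      exact h5
    have hδ_le : δ ^ ((α - 1) * α⁻¹) ≤ ε / 8 := by
      have hδle : δ ≤ (ε / 8) ^ (α / (α - 1)) := min_le_right _ _
      have h6 : δ ^ ((α - 1) * α⁻¹) ≤ ((ε / 8) ^ (α / (α - 1))) ^ ((α - 1) * α⁻¹) :=
        Real.rpow_le_rpow hδpos.le hδle (mul_nonneg (by linarith) (by positivity))
      rw [← Real.rpow_mul (by linarith : (0:ℝ) ≤ ε / 8)] at h6
      have hexp : (α / (α - 1)) * ((α - 1) * α⁻¹) = 1 := by field_simp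
      rw [hexp, Real.rpow_one] at h6
      exact h6
    have hmo := MO_bound hr h2r
    calc MO logDist z r ≤ 4 * (r / s) := hmo
      _ = 4 * t := by rw [ht_def]
      _ ≤ 4 * (ε / 8) := by
          have := ht_final.trans hδ_le
          linarith
      _ < ε := by linarith
  · -- Lelong number
    have hev : ∀ᶠ r in 𝓝[>] (0:ℝ),
        (⨆ z ∈ ball (1 : ℂ) r, logDist z).toReal / Real.log r = 1 := by
      filter_upwards [Ioo_mem_nhdsGT_of_mem (Set.mem_Ico.mpr ⟨le_refl 0, one_pos⟩)] with r hrr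
      obtain ⟨hr0, hr1⟩ := hrr
      rw [iSup_logDist_ball hr0]
      have hlog : Real.log r ≠ 0 := (Real.log_neg hr0 hr1).ne
      simp [hlog]
    exact Tendsto.congr' (EventuallyEq.symm hev) tendsto_const_nhds
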